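/- Assume (Theorem 1.3 of [P]) that for 0 < ε < 1 there exist β_ε > 0 and n₀(ε) such that for all n ≥ n₀ and all N ≥ 1 there is a set 𝒯 ⊂ U(N)^n with |𝒯| ≥ exp(β_ε n N²), satisfying ‖Σ_j u_j ⊗ v̄_j‖ ≤ n(1−ε) for all distinct u, v ∈ 𝒯 and ‖(Σ_j u_j ⊗ ū_j)|_{I^⊥}‖ ≤ n(1−ε) for all u ∈ 𝒯. Then, setting s_j = ⊕_{t∈𝒯} t_j ∈ U(|𝒯|N), G the subgroup of U(|𝒯|N) generated by S = {s₁,…,s_n}, and π: G → U(|𝒯|N) the inclusion representation, the representations π_t := (t-th block of π) are pairwise non-equivalent irreducible N-dimensional representations of G whose direct sum is π, and |𝒯| ≥ exp(β_ε n N²). -/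

import Mathlib

open Matrix


lemma aux_tr_eq {N : ℕ} (x : Matrix (Fin N) (Fin N) ℂ) :
    ((xᴴ * x).trace).re = ∑ i, ∑ j, Complex.normSq (x j i) := by
  have : (xᴴ * x).trace = ∑ i, ∑ j, (starRingEnd ℂ) (x j i) * x j i := by
    simp [Matrix.trace, Matrix.mul_apply, Matrix.diag, conjTranspose_apply]
  rw [this]
  simp only [Complex.re_sum]
  refine Finset.sum_congr rfl fun i _ => Finset.sum_congr rfl fun j _ => ?_
  rw [mul_comm, Complex.mul_conj]
  simp

lemma aux_tr_nonneg {N : ℕ} (x : Matrix (Fin N) (Fin N) ℂ) :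
    0 ≤ ((xᴴ * x).trace).re := by
  rw [aux_tr_eq]
  exact Finset.sum_nonneg fun i _ => Finset.sum_nonneg fun j _ => Complex.normSq_nonneg _

lemma aux_tr_zero {N : ℕ} (x : Matrix (Fin N) (Fin N) ℂ)
    (h : ((xᴴ * x).trace).re ≤ 0) : x = 0 := by
  rw [aux_tr_eq] at h
  have h' : ∀ i ∈ Finset.univ, ∀ j ∈ (Finset.univ : Finset (Fin N)),
      Complex.normSq (x j i) = 0 := by
    have := (Finset.sum_eq_zero_iff_of_nonneg (fun i _ =>
      Finset.sum_nonneg fun j _ => Complex.normSq_nonneg (x j i))).mp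
      (le_antisymm h (Finset.sum_nonneg fun i _ =>
        Finset.sum_nonneg fun j _ => Complex.normSq_nonneg _))
    intro i hi j hj
    exact (Finset.sum_eq_zero_iff_of_nonneg (fun j _ => Complex.normSq_nonneg _)).mp
      (this i hi) j hj
  ext j i
  simpa using Complex.normSq_eq_zero.mp (h' i (Finset.mem_univ i) j (Finset.mem_univ j))

lemma aux_sq_lt {n : ℕ} {ε : ℝ} (hn : 1 ≤ n) (hε : 0 < ε) (hε1 : ε < 1) :
    ((n : ℝ) * (1 - ε)) ^ 2 < ((n : ℝ)) ^ 2 := by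
  have hn' : (0 : ℝ) < n := by exact_mod_cast hn
  have h0 : (0 : ℝ) ≤ (n : ℝ) * (1 - ε) := by nlinarith
  have h1 : (n : ℝ) * (1 - ε) < n := by nlinarith
  exact pow_lt_pow_left₀ h1 h0 (by norm_num)

/-- Given a set `𝒯 ⊂ U(N)^n` with `|𝒯| ≥ exp(β_ε n N²)` such that distinct
`u, v ∈ 𝒯` satisfy `‖∑_j u_j ⊗ v̄_j‖ ≤ n(1−ε)` and each `u ∈ 𝒯` satisfies
`‖(∑_j u_j ⊗ ū_j)|_{I^⊥}‖ ≤ n(1−ε)` (both stated via the Hilbert–Schmidt action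
`x ↦ ∑_j u_j x v_jᴴ`), the block representations `π_t` of the group generated by
the block-diagonal unitaries `s_j = ⊕_{t∈𝒯} t_j` are irreducible (trivial
commutant of each tuple) and pairwise non-equivalent (no unitary intertwiner
between distinct tuples), and `|𝒯| ≥ exp(β_ε n N²)`. -/
theorem stmt19 {n N : ℕ} (hn : 1 ≤ n) (hN : 1 ≤ N) {ε β : ℝ}
    (hε : 0 < ε) (hε1 : ε < 1) (hβ : 0 < β)
    [DecidableEq (Fin n → Matrix (Fin N) (Fin N) ℂ)]
    (𝒯 : Finset (Fin n → Matrix (Fin N) (Fin N) ℂ))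
    (hunit : ∀ u ∈ 𝒯, ∀ j, u j ∈ Matrix.unitaryGroup (Fin N) ℂ)
    (hcard : Real.exp (β * n * N ^ 2) ≤ (𝒯.card : ℝ))
    (hsep : ∀ u ∈ 𝒯, ∀ v ∈ 𝒯, u ≠ v →
      ∀ x : Matrix (Fin N) (Fin N) ℂ,
        (((∑ j, u j * x * (v j)ᴴ)ᴴ * ∑ j, u j * x * (v j)ᴴ).trace).re
          ≤ ((n : ℝ) * (1 - ε)) ^ 2 * ((xᴴ * x).trace).re)
    (hgap : ∀ u ∈ 𝒯, ∀ x : Matrix (Fin N) (Fin N) ℂ, x.trace = 0 →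
      (((∑ j, u j * x * (u j)ᴴ)ᴴ * ∑ j, u j * x * (u j)ᴴ).trace).re
        ≤ ((n : ℝ) * (1 - ε)) ^ 2 * ((xᴴ * x).trace).re) :
    (∀ u ∈ 𝒯, ∀ x : Matrix (Fin N) (Fin N) ℂ, (∀ j, u j * x = x * u j) →
      ∃ c : ℂ, x = c • (1 : Matrix (Fin N) (Fin N) ℂ)) ∧
    (∀ u ∈ 𝒯, ∀ v ∈ 𝒯, u ≠ v →
      ¬ ∃ w ∈ Matrix.unitaryGroup (Fin N) ℂ, ∀ j, w * u j = v j * w) ∧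
    Real.exp (β * n * N ^ 2) ≤ (𝒯.card : ℝ) := by
  have hNne : (N : ℂ) ≠ 0 := by
    exact_mod_cast Nat.cast_ne_zero.mpr (by omega)
  refine ⟨?_, ?_, hcard⟩
  · -- irreducibility
    intro u hu x hcomm
    have hu1 : ∀ j, u j * (u j)ᴴ = 1 := fun j => by
      simpa [Matrix.star_eq_conjTranspose] using
        Matrix.mem_unitaryGroup_iff.mp (hunit u hu j)
    set c : ℂ := x.trace / N with hc
    set y : Matrix (Fin N) (Fin N) ℂ := x - c • 1 with hy
    have hytr : y.trace = 0 := by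
      simp [hy, Matrix.trace_sub, Matrix.trace_smul, Matrix.trace_one, hc,
        div_mul_cancel₀ _ hNne]
    have hsum : (∑ j, u j * y * (u j)ᴴ) = (n : ℂ) • y := by
      have hcy : ∀ j, u j * y * (u j)ᴴ = y := by
        intro j
        have h : u j * y = y * u j := by
          simp [hy, Matrix.mul_sub, Matrix.sub_mul, hcomm j, Matrix.mul_smul,
            Matrix.smul_mul]
        rw [h, mul_assoc, hu1 j, mul_one]
      simp [hcy, Finset.sum_const, ← Nat.cast_smul_eq_nsmul ℂ]
    have key := hgap u hu y hytr
    rw [hsum] at key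
    have hlhs : ((((n:ℂ) • y)ᴴ * ((n:ℂ) • y)).trace).re
        = (n:ℝ)^2 * ((yᴴ * y).trace).re := by
      rw [Matrix.conjTranspose_smul, Matrix.smul_mul, Matrix.mul_smul,
        smul_smul, Matrix.trace_smul]
      simp [Complex.ext_iff, pow_two]

    rw [hlhs] at key
    have hT := aux_tr_nonneg y
    have hlt := aux_sq_lt hn hε hε1
    have hT0 : ((yᴴ * y).trace).re ≤ 0 := by nlinarith
    have : y = 0 := aux_tr_zero y hT0
    exact ⟨c, by rw [← sub_eq_zero]; exact this⟩
  · -- non-equivalence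
    intro u hu v hv huv ⟨w, hw, hint⟩
    have hwu : w * wᴴ = 1 := by
      simpa [Matrix.star_eq_conjTranspose] using Matrix.mem_unitaryGroup_iff.mp hw
    have hw1 : wᴴ * w = 1 := by
      simpa [Matrix.star_eq_conjTranspose] using Matrix.mem_unitaryGroup_iff'.mp hw
    have hv1 : ∀ j, v j * (v j)ᴴ = 1 := fun j => by
      simpa [Matrix.star_eq_conjTranspose] using
        Matrix.mem_unitaryGroup_iff.mp (hunit v hv j)
    have hsum : (∑ j, u j * wᴴ * (v j)ᴴ) = (n : ℂ) • wᴴ := by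
      have hterm : ∀ j, u j * wᴴ * (v j)ᴴ = wᴴ := by
        intro j
        have h1 : u j * wᴴ = wᴴ * v j := by
          have h := congrArg (fun m => wᴴ * m * wᴴ) (hint j)
          simp only [← mul_assoc] at h
          rw [hw1, one_mul] at h
          rw [mul_assoc (wᴴ * v j) w wᴴ, hwu, mul_one] at h
          exact h
        rw [h1, mul_assoc, hv1 j, mul_one]
      simp [hterm, Finset.sum_const, ← Nat.cast_smul_eq_nsmul ℂ]
    have key := hsep u hu v hv huv wᴴ
    rw [hsum] at key
    have hlhs : ((((n:ℂ) • wᴴ)ᴴ * ((n:ℂ) • wᴴ)).trace).re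
        = (n:ℝ)^2 * (((wᴴ)ᴴ * wᴴ).trace).re := by
      rw [Matrix.conjTranspose_smul, Matrix.smul_mul, Matrix.mul_smul,
        smul_smul, Matrix.trace_smul]
      simp [Complex.ext_iff, pow_two]

    rw [hlhs] at key
    have hTpos : 0 < (((wᴴ)ᴴ * wᴴ).trace).re := by
      rw [Matrix.conjTranspose_conjTranspose, hwu, Matrix.trace_one]
      simp
      omega
    have hlt := aux_sq_lt hn hε hε1
    nlinarith
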